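/- Let (Ω, 𝓕, (𝓕_t)_{t ≥ 0}, P) be a filtered probability space, let E ⊆ ℝ^k, and let Y : [0, ∞) × Ω → E be an adapted process with continuous paths and constant initial value Y_0 = y ∈ E. Let f : E → ℝ be continuous with f > 0 on E, and let g : E → ℝ be continuous with g(x) ≤ K for all x ∈ E and some constant K ∈ ℝ. Suppose there exists a nondecreasing sequence of stopping times (τ_n)_{n ≥ 1} with τ_n → ∞ almost surely such that, for each n, the stopped process t ↦ f(Y_{t ∧ τ_n}) − ∫_0^{t ∧ τ_n} g(Y_s) ds is a martingale with respect to (𝓕_t). Then for every T ≥ 0, E[f(Y_T)] ≤ f(y) + max(K, 0)·T. -/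

import Mathlib

open MeasureTheory Filter

/-- Lemma B.2 (abstract form): if `f(Y_t) - ∫_0^t g(Y_s) ds` is a local martingale with
reducing sequence `τ_n`, `f > 0` is continuous on `E`, `g ≤ K` on `E`, `Y` is an adapted
`E`-valued process with continuous paths and `Y_0 = y`, then
`E[f(Y_T)] ≤ f(y) + max(K,0)·T` for every `T ≥ 0`. -/
theorem generator_upper_bound {Ω : Type*} {m : MeasurableSpace Ω} {P : Measure Ω}
    [IsProbabilityMeasure P] (ℱ : Filtration ℝ m) {k : ℕ} (E : Set (Fin k → ℝ))
    (Y : ℝ → Ω → Fin k → ℝ) (hYE : ∀ t ω, Y t ω ∈ E)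
    (hYadapted : Adapted ℱ Y)
    (hYcont : ∀ ω, Continuous fun t => Y t ω)
    (y : Fin k → ℝ) (hy : y ∈ E) (hY0 : ∀ ω, Y 0 ω = y)
    (f g : (Fin k → ℝ) → ℝ)
    (hf : ContinuousOn f E) (hfpos : ∀ x ∈ E, 0 < f x)
    (hg : ContinuousOn g E) (K : ℝ) (hgK : ∀ x ∈ E, g x ≤ K)
    (τ : ℕ → Ω → ℝ) (hτ : ∀ n, IsStoppingTime ℱ (fun ω => (τ n ω : WithTop ℝ)))
    (hτ0 : ∀ n ω, 0 ≤ τ n ω)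
    (hτmono : ∀ ω, Monotone fun n => τ n ω)
    (hτtendsto : ∀ᵐ ω ∂P, Tendsto (fun n => τ n ω) atTop atTop)
    (hmart : ∀ n, Martingale
      (fun t ω => f (Y (min t (τ n ω)) ω) - ∫ s in (0:ℝ)..(min t (τ n ω)), g (Y s ω)) ℱ P)
    (T : ℝ) (hT : 0 ≤ T) :
    ∫ ω, f (Y T ω) ∂P ≤ f y + max K 0 * T := by
  set C : ℝ := max K 0 * T with hCdef
  have hC0 : 0 ≤ C := mul_nonneg (le_max_right _ _) hT
  -- continuity of paths composed with g
  have hgY : ∀ ω, Continuous fun s => g (Y s ω) := fun ω =>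
    hg.comp_continuous (hYcont ω) fun s => hYE s ω
  -- bound on the integral term
  have hIbound : ∀ n ω, ∫ s in (0:ℝ)..(min T (τ n ω)), g (Y s ω) ≤ C := by
    intro n ω
    have hb0 : (0:ℝ) ≤ min T (τ n ω) := le_min hT (hτ0 n ω)
    have hbT : min T (τ n ω) ≤ T := min_le_left _ _
    have h1 : ∫ s in (0:ℝ)..(min T (τ n ω)), g (Y s ω)
        ≤ ∫ _s in (0:ℝ)..(min T (τ n ω)), K := by
      refine intervalIntegral.integral_mono_on hb0
        ((hgY ω).intervalIntegrable _ _) intervalIntegrable_const ?_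
      intro s _
      exact hgK _ (hYE s ω)
    rw [intervalIntegral.integral_const, smul_eq_mul] at h1
    calc ∫ s in (0:ℝ)..(min T (τ n ω)), g (Y s ω) ≤ (min T (τ n ω) - 0) * K := h1
      _ = min T (τ n ω) * K := by ring
      _ ≤ min T (τ n ω) * max K 0 := mul_le_mul_of_nonneg_left (le_max_left _ _) hb0
      _ ≤ T * max K 0 := mul_le_mul_of_nonneg_right hbT (le_max_right _ _)
      _ = C := by rw [hCdef]; ring
  set M : ℕ → Ω → ℝ :=
    fun n ω => f (Y (min T (τ n ω)) ω) - ∫ s in (0:ℝ)..(min T (τ n ω)), g (Y s ω) with hM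
  have hMint : ∀ n, Integrable (M n) P := fun n => (hmart n).integrable T
  -- the martingale has constant expectation `f y`
  have hMintegral : ∀ n, ∫ ω, M n ω ∂P = f y := by
    intro n
    have h0 : (fun ω => f (Y (min 0 (τ n ω)) ω)
        - ∫ s in (0:ℝ)..(min 0 (τ n ω)), g (Y s ω)) = fun _ => f y := by
      funext ω
      rw [min_eq_left (hτ0 n ω), hY0 ω, intervalIntegral.integral_same, sub_zero]
    have hc := (hmart n).condExp_ae_eq hT
    rw [h0] at hc
    calc ∫ ω, M n ω ∂P
        = ∫ ω, (P[M n| ℱ 0]) ω ∂P := (integral_condExp (ℱ.le 0)).symm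
      _ = ∫ _ω, f y ∂P := integral_congr_ae hc
      _ = f y := by simp
  -- measurability of the stopped values
  have hprog : ProgMeasurable ℱ Y := hYadapted.stronglyAdapted.progMeasurable_of_continuous hYcont
  have hstopSM : ∀ n, StronglyMeasurable[ℱ T] fun ω => Y (min T (τ n ω)) ω := by
    intro n
    have h := stronglyMeasurable_stoppedValue_of_le hprog ((hτ n).min_const T)
      fun ω => min_le_right _ _
    have : (stoppedValue Y fun ω => min (τ n ω : WithTop ℝ) (T : WithTop ℝ)) = fun ω => Y (min T (τ n ω)) ω := by
      funext ω; simp only [stoppedValue]; rw [min_comm, ← WithTop.coe_min, WithTop.untopA_eq_untop WithTop.coe_ne_top]; rfl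
    rwa [this] at h
  have hfE : Continuous (E.restrict f) := continuousOn_iff_continuous_restrict.mp hf
  have hmeasf : ∀ n, Measurable fun ω => f (Y (min T (τ n ω)) ω) := by
    intro n
    have h1 : Measurable fun ω => (⟨Y (min T (τ n ω)) ω, hYE _ ω⟩ : E) :=
      Measurable.subtype_mk (((hstopSM n).measurable).mono (ℱ.le T) le_rfl)
    exact hfE.measurable.comp h1
  have hmeasfT : Measurable fun ω => f (Y T ω) := by
    have h1 : Measurable fun ω => (⟨Y T ω, hYE T ω⟩ : E) :=
      Measurable.subtype_mk (((hYadapted T)).mono (ℱ.le T) le_rfl)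
    exact hfE.measurable.comp h1
  -- per-n lintegral bound
  have hln : ∀ n, ∫⁻ ω, ENNReal.ofReal (f (Y (min T (τ n ω)) ω)) ∂P
      ≤ ENNReal.ofReal (f y + C) := by
    intro n
    have hnn : 0 ≤ᵐ[P] fun ω => M n ω + C := by
      refine Eventually.of_forall fun ω => ?_
      have hfp := hfpos _ (hYE (min T (τ n ω)) ω)
      have hI := hIbound n ω
      simp only [hM, Pi.zero_apply]
      linarith
    have hint : Integrable (fun ω => M n ω + C) P := (hMint n).add (integrable_const C)
    have h1 : ∫⁻ ω, ENNReal.ofReal (f (Y (min T (τ n ω)) ω)) ∂P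
        ≤ ∫⁻ ω, ENNReal.ofReal (M n ω + C) ∂P := by
      refine lintegral_mono fun ω => ENNReal.ofReal_le_ofReal ?_
      have hI := hIbound n ω
      simp only [hM]
      linarith
    have h2 : ∫⁻ ω, ENNReal.ofReal (M n ω + C) ∂P
        = ENNReal.ofReal (∫ ω, (M n ω + C) ∂P) :=
      (ofReal_integral_eq_lintegral_ofReal hint hnn).symm
    have h3 : ∫ ω, (M n ω + C) ∂P = f y + C := by
      rw [integral_add (hMint n) (integrable_const C), hMintegral n, integral_const]
      simp
    calc ∫⁻ ω, ENNReal.ofReal (f (Y (min T (τ n ω)) ω)) ∂P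
        ≤ ∫⁻ ω, ENNReal.ofReal (M n ω + C) ∂P := h1
      _ = ENNReal.ofReal (f y + C) := by rw [h2, h3]
  -- Fatou
  have hFatou : ∫⁻ ω, liminf (fun n => ENNReal.ofReal (f (Y (min T (τ n ω)) ω))) atTop ∂P
      ≤ ENNReal.ofReal (f y + C) := by
    refine le_trans (lintegral_liminf_le fun n =>
      ENNReal.measurable_ofReal.comp (hmeasf n)) ?_
    refine le_trans (liminf_le_liminf (Eventually.of_forall hln)) ?_
    simp
  have hae : ∀ᵐ ω ∂P,
      liminf (fun n => ENNReal.ofReal (f (Y (min T (τ n ω)) ω))) atTop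
        = ENNReal.ofReal (f (Y T ω)) := by
    filter_upwards [hτtendsto] with ω hω
    have hev : ∀ᶠ n in atTop,
        ENNReal.ofReal (f (Y (min T (τ n ω)) ω)) = ENNReal.ofReal (f (Y T ω)) := by
      filter_upwards [hω.eventually_ge_atTop T] with n hn
      rw [min_eq_left hn]
    exact Tendsto.liminf_eq (Tendsto.congr' (hev.mono fun n h => h.symm) tendsto_const_nhds)
  have hkey : ∫⁻ ω, ENNReal.ofReal (f (Y T ω)) ∂P ≤ ENNReal.ofReal (f y + C) := by
    calc ∫⁻ ω, ENNReal.ofReal (f (Y T ω)) ∂P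
        = ∫⁻ ω, liminf (fun n => ENNReal.ofReal (f (Y (min T (τ n ω)) ω))) atTop ∂P :=
          (lintegral_congr_ae hae).symm
      _ ≤ ENNReal.ofReal (f y + C) := hFatou
  have heq : ∫ ω, f (Y T ω) ∂P = (∫⁻ ω, ENNReal.ofReal (f (Y T ω)) ∂P).toReal :=
    integral_eq_lintegral_of_nonneg_ae
      (Eventually.of_forall fun ω => (hfpos _ (hYE T ω)).le)
      hmeasfT.aestronglyMeasurable
  rw [heq]
  calc (∫⁻ ω, ENNReal.ofReal (f (Y T ω)) ∂P).toReal
      ≤ (ENNReal.ofReal (f y + C)).toReal :=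
        ENNReal.toReal_mono ENNReal.ofReal_ne_top hkey
    _ = f y + C := ENNReal.toReal_ofReal (add_nonneg (hfpos y hy).le hC0)
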